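/- arXiv:1804.02945 — 5 statements merged into one kernel-verified Lean document; each statement's English description precedes it below -/
import Mathlib

section
/- Let f = h + conj(g) be a harmonic mapping on the unit disk 𝔻 and suppose M := ‖f‖_n = sup_{z ∈ 𝔻} (1−|z|²)·(|h′(z)|+|g′(z)|)/(1+|f(z)|²) is finite. Then for all z, w ∈ 𝔻 one has χ(f(z), f(w)) ≤ M·ρ(z,w), where χ is the chordal distance and ρ is the hyperbolic distance; in particular f is normal. -/
open Complex Metric Set ENNReal Filter

noncomputable section

/-- The open unit disk in the complex plane. -/
def unitDisk : Set ℂ := Metric.ball (0 : ℂ) 1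

notation "𝔻" => unitDisk

/-- The chordal distance on ℂ. -/
def chordal (z w : ℂ) : ℝ :=
  ‖z - w‖ /
    (Real.sqrt (1 + ‖z‖ ^ 2) * Real.sqrt (1 + ‖w‖ ^ 2))

/-- The hyperbolic distance on the unit disk. -/
def hypDist (z w : ℂ) : ℝ :=
  (1 / 2) * Real.log
    ((1 + ‖(z - w) / (1 - (starRingEnd ℂ) z * w)‖) /
     (1 - ‖(z - w) / (1 - (starRingEnd ℂ) z * w)‖))

/-- The harmonic mapping `f = h + conj g`. -/
def harmMap (h g : ℂ → ℂ) : ℂ → ℂ := fun z => h z + (starRingEnd ℂ) (g z)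

/-- The quantity `(1 - |z|²) (|h'(z)| + |g'(z)|) / (1 + |f(z)|²)` for `f = h + conj g`. -/
def nQuot (h g : ℂ → ℂ) (z : ℂ) : ℝ :=
  (1 - ‖z‖ ^ 2) * (‖deriv h z‖ + ‖deriv g z‖) /
    (1 + ‖harmMap h g z‖ ^ 2)

/-- `‖f‖ₙ`, the normality norm of the harmonic mapping `f = h + conj g`,
as an element of `[0, ∞]`. -/
def harmNorm (h g : ℂ → ℂ) : ℝ≥0∞ :=
  ⨆ z ∈ 𝔻, ENNReal.ofReal (nQuot h g z)

/-- `φ` is a conformal automorphism of the unit disk. -/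
def IsDiskAut (φ : ℂ → ℂ) : Prop :=
  DifferentiableOn ℂ φ 𝔻 ∧ Set.MapsTo φ 𝔻 𝔻 ∧
    ∃ ψ : ℂ → ℂ, DifferentiableOn ℂ ψ 𝔻 ∧ Set.MapsTo ψ 𝔻 𝔻 ∧
      (∀ z ∈ 𝔻, ψ (φ z) = z) ∧ (∀ z ∈ 𝔻, φ (ψ z) = z)

/-! ### Auxiliary material -/

/-- Stereographic-type map into the L2 product. -/
def sphMap (u : ℂ) : WithLp 2 (ℂ × ℝ) :=
  (WithLp.equiv 2 (ℂ × ℝ)).symm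
    (2*u/((Complex.normSq u + 1 : ℝ):ℂ), (Complex.normSq u - 1)/(Complex.normSq u + 1))

lemma real_key (na nb q : ℝ) (hna : 0 ≤ na) (hnb : 0 ≤ nb) :
    4*((nb+1)^2*na - 2*(na+1)*(nb+1)*q + (na+1)^2*nb)/((na+1)*(nb+1))^2
      + ((na-1)/(na+1) - (nb-1)/(nb+1))^2 = 4*(na - 2*q + nb)/((na+1)*(nb+1)) := by
  have h1 : na+1 ≠ 0 := by positivity
  have h2 : nb+1 ≠ 0 := by positivity
  field_simp
  ring

lemma normSq_comb (su sv : ℝ) (a b : ℂ) :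
    Complex.normSq ((sv:ℂ)*a - (su:ℂ)*b)
      = sv^2*Complex.normSq a - 2*su*sv*(a.re*b.re + a.im*b.im) + su^2*Complex.normSq b := by
  simp only [Complex.normSq_apply, Complex.sub_re, Complex.sub_im, Complex.mul_re, Complex.mul_im,
    Complex.ofReal_re, Complex.ofReal_im]
  ring

lemma normSq_sub' (a b : ℂ) :
    Complex.normSq (a - b) = Complex.normSq a - 2*(a.re*b.re + a.im*b.im) + Complex.normSq b := by
  simp only [Complex.normSq_apply, Complex.sub_re, Complex.sub_im]
  ring

lemma sphMap_sub_norm_sq (a b : ℂ) :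
    ‖sphMap a - sphMap b‖^2
      = 4 * Complex.normSq (a - b)/((Complex.normSq a + 1)*(Complex.normSq b + 1)) := by
  set na := Complex.normSq a with hna
  set nb := Complex.normSq b with hnb
  have hna0 : 0 ≤ na := Complex.normSq_nonneg a
  have hnb0 : 0 ≤ nb := Complex.normSq_nonneg b
  have ha : (0:ℝ) < na + 1 := by linarith
  have hb : (0:ℝ) < nb + 1 := by linarith
  have ha' : ((na + 1:ℝ):ℂ) ≠ 0 := Complex.ofReal_ne_zero.mpr (ne_of_gt ha)
  have hb' : ((nb + 1:ℝ):ℂ) ≠ 0 := Complex.ofReal_ne_zero.mpr (ne_of_gt hb)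
  rw [sphMap, sphMap, WithLp.equiv_symm_apply, ← WithLp.toLp_sub, WithLp.prod_norm_sq_eq_of_L2,
    WithLp.toLp_fst, WithLp.toLp_snd]
  simp only [Prod.fst_sub, Prod.snd_sub]
  have e1 : (2*a/((na + 1:ℝ):ℂ) - 2*b/((nb + 1:ℝ):ℂ))
      = (2*(((nb + 1:ℝ):ℂ)*a - ((na + 1:ℝ):ℂ)*b)) / (((na + 1:ℝ):ℂ) * ((nb + 1:ℝ):ℂ)) := by
    rw [div_sub_div _ _ ha' hb']
    congr 1
    ring
  rw [e1]
  rw [norm_div, norm_mul, norm_mul, Complex.norm_two,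
    Complex.norm_real, Complex.norm_real, Real.norm_eq_abs, Real.norm_eq_abs, abs_of_pos ha, abs_of_pos hb]
  rw [div_pow, mul_pow, mul_pow, Complex.sq_norm, normSq_comb, Real.norm_eq_abs, _root_.sq_abs,
    normSq_sub']
  have := real_key na nb (a.re*b.re + a.im*b.im) hna0 hnb0
  calc 2^2 * (((nb+1)^2*na - 2*(na+1)*(nb+1)*(a.re*b.re + a.im*b.im) + (na+1)^2*nb))/((na+1)^2*(nb+1)^2)
        + ((na-1)/(na+1) - (nb-1)/(nb+1))^2
      = 4*((nb+1)^2*na - 2*(na+1)*(nb+1)*(a.re*b.re + a.im*b.im) + (na+1)^2*nb)/((na+1)*(nb+1))^2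
          + ((na-1)/(na+1) - (nb-1)/(nb+1))^2 := by ring
    _ = 4*(na - 2*(a.re*b.re + a.im*b.im) + nb)/((na+1)*(nb+1)) := this
    _ = 4 * (na - 2*(a.re*b.re + a.im*b.im) + nb)/((na+1)*(nb+1)) := by ring

lemma chordal_nonneg (a b : ℂ) : 0 ≤ chordal a b := by
  apply div_nonneg (norm_nonneg _)
  positivity

lemma chordal_eq (a b : ℂ) : chordal a b = ‖sphMap a - sphMap b‖ / 2 := by
  have hna0 := Complex.normSq_nonneg a
  have hnb0 := Complex.normSq_nonneg b
  have h1 : chordal a b ^ 2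
      = Complex.normSq (a-b) / ((Complex.normSq a + 1)*(Complex.normSq b + 1)) := by
    rw [chordal, div_pow, mul_pow, Real.sq_sqrt (by positivity), Real.sq_sqrt (by positivity),
      Complex.sq_norm, Complex.sq_norm, Complex.sq_norm]
    ring_nf
  have h2 : (‖sphMap a - sphMap b‖ / 2)^2
      = Complex.normSq (a-b) / ((Complex.normSq a + 1)*(Complex.normSq b + 1)) := by
    rw [div_pow, sphMap_sub_norm_sq]
    ring
  have h3 : chordal a b ^ 2 = (‖sphMap a - sphMap b‖ / 2)^2 := by rw [h1, h2]
  have hc := chordal_nonneg a b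
  have hn : (0:ℝ) ≤ ‖sphMap a - sphMap b‖ / 2 := by positivity
  nlinarith [h3, hc, hn]

lemma real_key2 (n q na' : ℝ) (hn : 0 ≤ n) :
    4*((n+1)^2*na' - 2*(n+1)*(2*q)*q + (2*q)^2*n)/((n+1)^2)^2
      + ((2*q) * (n+1) - (n-1)*(2*q))^2/((n+1)^2)^2 = 4*na'/(n+1)^2 := by
  have h1 : n+1 ≠ 0 := by positivity
  field_simp
  ring

lemma normSq_comb2 (s p : ℝ) (A a' : ℂ) :
    Complex.normSq (2*a'*(s:ℂ) - 2*A*(p:ℂ))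
      = 4*(s^2*Complex.normSq a' - 2*s*p*(a'.re*A.re + a'.im*A.im) + p^2*Complex.normSq A) := by
  simp only [Complex.normSq_apply, Complex.sub_re, Complex.sub_im, Complex.mul_re, Complex.mul_im,
    Complex.ofReal_re, Complex.ofReal_im, Complex.re_ofNat, Complex.im_ofNat]
  ring

lemma Fnorm (A a' : ℂ) (s p : ℝ) (hs : s = Complex.normSq A + 1)
    (hp : p = (a' * (starRingEnd ℂ) A + A * (starRingEnd ℂ) a').re) :
    ‖(WithLp.equiv 2 (ℂ × ℝ)).symm ((2*a' * (s:ℂ) - 2*A*(p:ℂ))/((s:ℂ))^2,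
        (p * s - (Complex.normSq A - 1)*p)/s^2)‖ = 2 * ‖a'‖ / s := by
  have hn0 : 0 ≤ Complex.normSq A := Complex.normSq_nonneg A
  have hs0 : 0 < s := by rw [hs]; linarith
  have hq : p = 2*(a'.re*A.re + a'.im*A.im) := by
    rw [hp]
    simp only [Complex.add_re, Complex.mul_re, Complex.conj_re, Complex.conj_im]
    ring
  have hsq : ‖(WithLp.equiv 2 (ℂ × ℝ)).symm ((2*a' * (s:ℂ) - 2*A*(p:ℂ))/((s:ℂ))^2,
      (p * s - (Complex.normSq A - 1)*p)/s^2)‖^2 = 4 * Complex.normSq a' / s^2 := by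
    rw [WithLp.prod_norm_sq_eq_of_L2, WithLp.equiv_symm_apply, WithLp.toLp_fst, WithLp.toLp_snd]
    dsimp only
    rw [Complex.sq_norm, map_div₀, Real.norm_eq_abs, _root_.sq_abs]
    rw [map_pow, Complex.normSq_ofReal]
    have e2 : Complex.normSq (2*a' * (s:ℂ) - 2*A*(p:ℂ))
        = 4*(s^2*Complex.normSq a' - 2*s*p*(a'.re*A.re + a'.im*A.im) + p^2*Complex.normSq A) := by
      have := normSq_comb2 s p A a'
      calc Complex.normSq (2*a' * (s:ℂ) - 2*A*(p:ℂ)) = Complex.normSq (2*a'*(s:ℂ) - 2*A*(p:ℂ)) := by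
            ring_nf
        _ = _ := this
    rw [e2, hq]
    have := real_key2 (Complex.normSq A) (a'.re*A.re + a'.im*A.im) (Complex.normSq a') hn0
    rw [← hs] at this
    calc 4*(s^2*Complex.normSq a' - 2*s*(2*(a'.re*A.re + a'.im*A.im))*(a'.re*A.re + a'.im*A.im)
            + (2*(a'.re*A.re + a'.im*A.im))^2*Complex.normSq A)/(s*s)^2
          + (((2*(a'.re*A.re + a'.im*A.im)) * s - (Complex.normSq A - 1)*(2*(a'.re*A.re + a'.im*A.im)))/(s^2))^2
        = 4*(s^2*Complex.normSq a' - 2*s*(2*(a'.re*A.re + a'.im*A.im))*(a'.re*A.re + a'.im*A.im)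
            + (2*(a'.re*A.re + a'.im*A.im))^2*Complex.normSq A)/((s)^2)^2
          + ((2*(a'.re*A.re + a'.im*A.im)) * s - (Complex.normSq A - 1)*(2*(a'.re*A.re + a'.im*A.im)))^2/((s)^2)^2 := by
          ring_nf
      _ = 4*Complex.normSq a'/s^2 := this
  have h1 : 0 ≤ 2 * ‖a'‖ / s := by positivity
  have h2 : (2 * ‖a'‖ / s)^2 = 4 * Complex.normSq a' / s^2 := by
    rw [div_pow, mul_pow, Complex.sq_norm]
    ring
  nlinarith [hsq, h1, h2, norm_nonneg ((WithLp.equiv 2 (ℂ × ℝ)).symm ((2*a' * (s:ℂ) - 2*A*(p:ℂ))/((s:ℂ))^2,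
      (p * s - (Complex.normSq A - 1)*p)/s^2))]

/-! ### Möbius geodesic -/

lemma mobius_normSq (z ζ : ℂ) :
    Complex.normSq (1 + (starRingEnd ℂ) z * ζ) - Complex.normSq (ζ + z)
      = (1 - Complex.normSq z) * (1 - Complex.normSq ζ) := by
  simp only [Complex.normSq_apply, Complex.add_re, Complex.add_im, Complex.mul_re, Complex.mul_im,
    Complex.one_re, Complex.one_im, Complex.conj_re, Complex.conj_im]
  ring

lemma den_ne_zero {z ζ : ℂ} (hz : ‖z‖ < 1) (hζ : ‖ζ‖ ≤ 1) :
    1 + (starRingEnd ℂ) z * ζ ≠ 0 := by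
  intro hc
  have h1 : (starRingEnd ℂ) z * ζ = -1 := by linear_combination hc
  have h2 : ‖(starRingEnd ℂ) z * ζ‖ = 1 := by rw [h1]; simp
  rw [norm_mul, Complex.norm_conj] at h2
  nlinarith [norm_nonneg ζ, norm_nonneg z]

lemma one_sub_normSq_mobius {z ζ : ℂ} (hz : ‖z‖ < 1) (hζ : ‖ζ‖ ≤ 1) :
    1 - Complex.normSq ((ζ + z)/(1 + (starRingEnd ℂ) z * ζ))
      = (1 - Complex.normSq z)*(1 - Complex.normSq ζ)/Complex.normSq (1 + (starRingEnd ℂ) z * ζ) := by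
  have hne := den_ne_zero hz hζ
  have hpos : 0 < Complex.normSq (1 + (starRingEnd ℂ) z * ζ) := Complex.normSq_pos.mpr hne
  have e : 1 - Complex.normSq (ζ + z)/Complex.normSq (1 + (starRingEnd ℂ) z * ζ)
      = (Complex.normSq (1 + (starRingEnd ℂ) z * ζ) - Complex.normSq (ζ + z))
        /Complex.normSq (1 + (starRingEnd ℂ) z * ζ) := by
    rw [one_sub_div hpos.ne']
  rw [Complex.normSq_div, e, mobius_normSq]

lemma mobius_mem {z ζ : ℂ} (hz : ‖z‖ < 1) (hζ : ‖ζ‖ < 1) :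
    ‖(ζ + z)/(1 + (starRingEnd ℂ) z * ζ)‖ < 1 := by
  have h1 := one_sub_normSq_mobius hz (le_of_lt hζ)
  have hnz : Complex.normSq z < 1 := by
    rw [← Complex.sq_norm]; nlinarith [norm_nonneg z]
  have hnζ : Complex.normSq ζ < 1 := by
    rw [← Complex.sq_norm]; nlinarith [norm_nonneg ζ]
  have hpos : 0 < Complex.normSq (1 + (starRingEnd ℂ) z * ζ) :=
    Complex.normSq_pos.mpr (den_ne_zero hz (le_of_lt hζ))
  have h2 : 0 < 1 - Complex.normSq ((ζ + z)/(1 + (starRingEnd ℂ) z * ζ)) := by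
    rw [h1]
    have hA : (0:ℝ) < 1 - Complex.normSq z := by linarith
    have hB : (0:ℝ) < 1 - Complex.normSq ζ := by linarith
    exact div_pos (mul_pos hA hB) hpos
  have h3 := Complex.sq_norm ((ζ + z)/(1 + (starRingEnd ℂ) z * ζ))
  nlinarith [norm_nonneg ((ζ + z)/(1 + (starRingEnd ℂ) z * ζ))]

/-- The geodesic path. -/
def geo (z ζ₀ : ℂ) (t : ℝ) : ℂ :=
  ((t:ℂ)*ζ₀ + z)/(1 + (starRingEnd ℂ) z * ((t:ℂ)*ζ₀))

/-- Its derivative. -/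
def geoD (z ζ₀ : ℂ) (t : ℝ) : ℂ :=
  ζ₀*(1 - (starRingEnd ℂ) z * z)/(1 + (starRingEnd ℂ) z * ((t:ℂ)*ζ₀))^2

lemma geo_hasDeriv {z ζ₀ : ℂ} (hz : ‖z‖ < 1) {t : ℝ}
    (ht : ‖(t:ℂ)*ζ₀‖ ≤ 1) :
    HasDerivAt (geo z ζ₀) (geoD z ζ₀ t) t := by
  have hne : 1 + (starRingEnd ℂ) z * ((t:ℂ)*ζ₀) ≠ 0 := den_ne_zero hz ht
  have hnum : HasDerivAt (fun u:ℝ => (u:ℂ)*ζ₀ + z) ζ₀ t := by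
    simpa using (Complex.ofRealCLM.hasDerivAt.mul_const ζ₀).add_const z
  have hden : HasDerivAt (fun u:ℝ => 1 + (starRingEnd ℂ) z * ((u:ℂ)*ζ₀))
      ((starRingEnd ℂ) z * ζ₀) t := by
    simpa using ((Complex.ofRealCLM.hasDerivAt.mul_const ζ₀).const_mul ((starRingEnd ℂ) z)).const_add 1
  have hdiv := hnum.div hden hne
  refine hdiv.congr_deriv ?_
  rw [geoD]
  rw [div_eq_div_iff (by exact pow_ne_zero 2 hne) (by exact pow_ne_zero 2 hne)]
  ring
lemma normSq_lt_one {z : ℂ} (hz : ‖z‖ < 1) : Complex.normSq z < 1 := by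
  rw [← Complex.sq_norm]; nlinarith [norm_nonneg z]

lemma nQuot_nonneg (h g : ℂ → ℂ) {ζ : ℂ} (hζ : ζ ∈ 𝔻) : 0 ≤ nQuot h g ζ := by
  have h1 : ‖ζ‖ < 1 := by
    simpa using mem_ball_zero_iff.mp hζ
  have h2 : (0:ℝ) ≤ 1 - ‖ζ‖ ^ 2 := by nlinarith [norm_nonneg ζ]
  apply div_nonneg (mul_nonneg h2 (by positivity)) (by positivity)

set_option maxHeartbeats 1000000 in
lemma main_ineq (h g : ℂ → ℂ) (hh : DifferentiableOn ℂ h 𝔻) (hg : DifferentiableOn ℂ g 𝔻)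
    (M : ℝ) (hM : ∀ ζ ∈ 𝔻, nQuot h g ζ ≤ M) {z w : ℂ} (hz : z ∈ 𝔻) (hw : w ∈ 𝔻) :
    chordal (harmMap h g z) (harmMap h g w) ≤ M * hypDist z w := by
  have hOpen : IsOpen 𝔻 := Metric.isOpen_ball
  have hz1 : ‖z‖ < 1 := by
    simpa using mem_ball_zero_iff.mp hz
  have hw1 : ‖w‖ < 1 := by
    simpa using mem_ball_zero_iff.mp hw
  have hM0 : 0 ≤ M := le_trans (nQuot_nonneg h g hz) (hM z hz)
  set c := (starRingEnd ℂ) z with hc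
  have hd0 : (1:ℂ) - c*w ≠ 0 := by
    intro hcon
    apply den_ne_zero (ζ := -w) hz1 (by simpa using hw1.le)
    linear_combination hcon
  set ζ₀ := (w - z)/(1 - c*w) with hζ₀
  set r := ‖ζ₀‖ with hr
  have hr0 : 0 ≤ r := norm_nonneg ζ₀
  have hnz1 : Complex.normSq z < 1 := normSq_lt_one hz1
  have hr1 : r < 1 := by
    rw [hr, hζ₀, norm_div, div_lt_one (norm_pos_iff.mpr hd0)]
    have key := mobius_normSq z (-w)
    have e1 : (1:ℂ) + c*(-w) = 1 - c*w := by ring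
    have e2 : -w + z = -(w - z) := by ring
    simp only [← hc, e1, e2, Complex.normSq_neg] at key
    have hnw : Complex.normSq w < 1 := normSq_lt_one hw1
    have hlt : Complex.normSq (w - z) < Complex.normSq (1 - c*w) := by nlinarith
    rw [Complex.norm_def, Complex.norm_def]
    exact Real.sqrt_lt_sqrt (Complex.normSq_nonneg _) hlt
  have hrr : ‖(z - w)/(1 - c*w)‖ = r := by
    rw [hr, hζ₀, norm_div, norm_div, norm_sub_rev z w]
  have hhyp : hypDist z w = (1/2)*(Real.log (1+r) - Real.log (1-r)) := by
    rw [hypDist, hrr, Real.log_div (by linarith) (by linarith)]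
  -- basic geodesic facts
  have habs_t : ∀ t : ℝ, t ∈ Icc (0:ℝ) 1 → ‖(t:ℂ)*ζ₀‖ = t*r := by
    intro t ht
    rw [norm_mul, Complex.norm_real, Real.norm_eq_abs, _root_.abs_of_nonneg ht.1, hr]
  have habs_le : ∀ t : ℝ, t ∈ Icc (0:ℝ) 1 → ‖(t:ℂ)*ζ₀‖ ≤ 1 := by
    intro t ht
    rw [habs_t t ht]
    nlinarith [ht.1, ht.2, hr0, hr1, mul_nonneg ht.1 hr0, mul_le_of_le_one_left hr0 ht.2]
  have habs_lt : ∀ t : ℝ, t ∈ Icc (0:ℝ) 1 → ‖(t:ℂ)*ζ₀‖ < 1 := by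
    intro t ht
    rw [habs_t t ht]
    calc t*r ≤ r := mul_le_of_le_one_left hr0 ht.2
      _ < 1 := hr1
  have hden : ∀ t : ℝ, t ∈ Icc (0:ℝ) 1 → (1 + c*((t:ℂ)*ζ₀)) ≠ 0 :=
    fun t ht => den_ne_zero hz1 (habs_le t ht)
  have hdenpos : ∀ t : ℝ, t ∈ Icc (0:ℝ) 1 → 0 < Complex.normSq (1 + c*((t:ℂ)*ζ₀)) :=
    fun t ht => Complex.normSq_pos.mpr (hden t ht)
  have hmem : ∀ t : ℝ, t ∈ Icc (0:ℝ) 1 → geo z ζ₀ t ∈ 𝔻 := by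
    intro t ht
    have := mobius_mem hz1 (habs_lt t ht)
    rw [unitDisk, mem_ball_zero_iff]
    exact this
  have hnormSq_t : ∀ t : ℝ, Complex.normSq ((t:ℂ)*ζ₀) = t^2*r^2 := by
    intro t
    rw [map_mul, Complex.normSq_ofReal, hr, ← Complex.sq_norm]
    ring
  have honesub : ∀ t : ℝ, t ∈ Icc (0:ℝ) 1 → 1 - Complex.normSq (geo z ζ₀ t)
      = (1 - Complex.normSq z)*(1 - t^2*r^2)/Complex.normSq (1 + c*((t:ℂ)*ζ₀)) := by
    intro t ht
    rw [geo, one_sub_normSq_mobius hz1 (habs_le t ht), hnormSq_t t]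
  have honesub_pos : ∀ t : ℝ, t ∈ Icc (0:ℝ) 1 → 0 < 1 - Complex.normSq (geo z ζ₀ t) := by
    intro t ht
    rw [honesub t ht]
    have htr : t*r < 1 := lt_of_le_of_lt (mul_le_of_le_one_left hr0 ht.2) hr1
    have htr0 : 0 ≤ t*r := mul_nonneg ht.1 hr0
    have h1 : 0 < 1 - t^2*r^2 := by nlinarith [htr, htr0]
    exact div_pos (mul_pos (by linarith) h1) (hdenpos t ht)
  have habs_geoD : ∀ t : ℝ, ‖geoD z ζ₀ t‖
      = r * (1 - Complex.normSq z)/Complex.normSq (1 + c*((t:ℂ)*ζ₀)) := by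
    intro t
    have h1 : 1 - c * z = ((1 - Complex.normSq z : ℝ):ℂ) := by
      rw [hc]
      push_cast
      rw [Complex.normSq_eq_conj_mul_self]
    rw [geoD, norm_div, norm_mul, norm_pow, Complex.sq_norm, h1, Complex.norm_real, Real.norm_eq_abs,
      _root_.abs_of_nonneg (show (0:ℝ) ≤ 1 - Complex.normSq z by linarith), ← hr, ← hc]
  have hend0 : geo z ζ₀ 0 = z := by simp [geo]
  have hend1 : geo z ζ₀ 1 = w := by
    have h1 : ((1:ℝ):ℂ)*ζ₀ = ζ₀ := by push_cast; ring
    have h2 : (1 + c*ζ₀) ≠ 0 := by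
      have := hden 1 (by norm_num)
      rwa [h1] at this
    rw [geo, h1, div_eq_iff h2, hζ₀]
    have hd0' : 1 - w*c ≠ 0 := by rwa [mul_comm]
    field_simp
    ring
  -- the composed path and its derivative
  set A : ℝ → ℂ := fun u => harmMap h g (geo z ζ₀ u) with hA
  set a' : ℝ → ℂ := fun u => geoD z ζ₀ u * deriv h (geo z ζ₀ u)
      + (starRingEnd ℂ) (geoD z ζ₀ u * deriv g (geo z ζ₀ u)) with ha'
  have hAder : ∀ t : ℝ, t ∈ Icc (0:ℝ) 1 → HasDerivAt A (a' t) t := by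
    intro t ht
    have hγ := geo_hasDeriv hz1 (habs_le t ht)
    have hmemt := hmem t ht
    have hhd : HasDerivAt h (deriv h (geo z ζ₀ t)) (geo z ζ₀ t) :=
      (hh.differentiableAt (hOpen.mem_nhds hmemt)).hasDerivAt
    have hgd : HasDerivAt g (deriv g (geo z ζ₀ t)) (geo z ζ₀ t) :=
      (hg.differentiableAt (hOpen.mem_nhds hmemt)).hasDerivAt
    have h1 : HasDerivAt (fun u => h (geo z ζ₀ u)) (geoD z ζ₀ t * deriv h (geo z ζ₀ t)) t := by
      simpa [Function.comp_def, smul_eq_mul] using HasDerivAt.scomp (hg := hhd) (hh := hγ)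
    have h2 : HasDerivAt (fun u => g (geo z ζ₀ u)) (geoD z ζ₀ t * deriv g (geo z ζ₀ t)) t := by
      simpa [Function.comp_def, smul_eq_mul] using HasDerivAt.scomp (hg := hgd) (hh := hγ)
    have h3 : HasDerivAt (fun u => (starRingEnd ℂ) (g (geo z ζ₀ u)))
        ((starRingEnd ℂ) (geoD z ζ₀ t * deriv g (geo z ζ₀ t))) t := by
      have := (Complex.conjCLE.toContinuousLinearMap.hasFDerivAt
        (x := g (geo z ζ₀ t))).comp_hasDerivAt t h2
      simpa [Function.comp_def, Complex.conjCLE_apply] using this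
    have h4 := h1.add h3
    rw [hA]
    simp only [harmMap]
    exact h4
  -- derivative of sphMap ∘ A
  set pA : ℝ → ℝ := fun u => (a' u * (starRingEnd ℂ) (A u) + A u * (starRingEnd ℂ) (a' u)).re
    with hpA
  set sA : ℝ → ℝ := fun u => Complex.normSq (A u) + 1 with hsA
  have hsApos : ∀ t : ℝ, 0 < sA t := by
    intro t
    have := Complex.normSq_nonneg (A t)
    rw [hsA]
    dsimp only
    linarith
  set Fd : ℝ → WithLp 2 (ℂ × ℝ) := fun u => (WithLp.equiv 2 (ℂ × ℝ)).symm
      ((2*a' u * ((sA u:ℝ):ℂ) - 2*A u*((pA u:ℝ):ℂ))/(((sA u:ℝ):ℂ))^2,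
       (pA u * sA u - (Complex.normSq (A u) - 1)*pA u)/(sA u)^2) with hFd
  have hnormSqDer : ∀ t : ℝ, t ∈ Icc (0:ℝ) 1 →
      HasDerivAt (fun u => Complex.normSq (A u)) (pA t) t := by
    intro t ht
    have hAd := hAder t ht
    have hconjA : HasDerivAt (fun u => (starRingEnd ℂ) (A u)) ((starRingEnd ℂ) (a' t)) t := by
      have := (Complex.conjCLE.toContinuousLinearMap.hasFDerivAt (x := A t)).comp_hasDerivAt t hAd
      simpa [Function.comp_def, Complex.conjCLE_apply] using this
    have hmul := hAd.mul hconjA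
    have h5 := (Complex.reCLM.hasFDerivAt
      (x := A t * (starRingEnd ℂ) (A t))).comp_hasDerivAt t hmul
    simpa only [Function.comp_def, Pi.mul_apply, Complex.reCLM_apply, Complex.mul_conj, Complex.ofReal_re,
      hpA] using h5
  have hFder : ∀ t : ℝ, t ∈ Icc (0:ℝ) 1 →
      HasDerivAt (fun u => sphMap (A u)) (Fd t) t := by
    intro t ht
    have hAd := hAder t ht
    have hnd := hnormSqDer t ht
    have hsne : ((sA t:ℝ):ℂ) ≠ 0 := Complex.ofReal_ne_zero.mpr (ne_of_gt (hsApos t))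
    have hsne' : (fun u => ((Complex.normSq (A u) + 1:ℝ):ℂ)) t ≠ 0 := by
      simpa [hsA] using hsne
    have hdenC : HasDerivAt (fun u => ((Complex.normSq (A u) + 1:ℝ):ℂ)) ((pA t:ℝ):ℂ) t := by
      have := (Complex.ofRealCLM.hasFDerivAt
        (x := Complex.normSq (A t) + 1)).comp_hasDerivAt t (hnd.add_const 1)
      simpa only [Function.comp_def, Complex.ofRealCLM_apply] using this
    have hC1 : HasDerivAt (fun u => 2*A u/((Complex.normSq (A u) + 1:ℝ):ℂ))
        ((2*a' t * ((sA t:ℝ):ℂ) - 2*A t*((pA t:ℝ):ℂ))/(((sA t:ℝ):ℂ))^2) t := by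
      have hnum : HasDerivAt (fun u => 2*A u) (2*a' t) t := hAd.const_mul 2
      have := hnum.div hdenC hsne'
      simpa [hsA, Pi.div_def] using this
    have hC2 : HasDerivAt (fun u => (Complex.normSq (A u) - 1)/(Complex.normSq (A u) + 1))
        ((pA t * sA t - (Complex.normSq (A t) - 1)*pA t)/(sA t)^2) t := by
      have := (hnd.sub_const 1).div (hnd.add_const 1) (by
        simpa [hsA] using ne_of_gt (hsApos t))
      simpa [hsA, Pi.div_def] using this
    have hpair := hC1.prodMk hC2
    have hlin := ((WithLp.prodContinuousLinearEquiv 2 ℝ ℂ ℝ).symm.toContinuousLinearMap.hasFDerivAt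
      (x := (2*A t/((Complex.normSq (A t) + 1:ℝ):ℂ),
        (Complex.normSq (A t) - 1)/(Complex.normSq (A t) + 1)))).comp_hasDerivAt t hpair
    simp only [Function.comp_def, ContinuousLinearEquiv.coe_coe,
      WithLp.prodContinuousLinearEquiv_symm_apply] at hlin
    have heq : (fun u => (WithLp.equiv 2 (ℂ × ℝ)).symm
        ((2*A u/((Complex.normSq (A u) + 1:ℝ):ℂ),
          (Complex.normSq (A u) - 1)/(Complex.normSq (A u) + 1))))
        = fun u => sphMap (A u) := by
      funext u
      simp [sphMap]
    rw [← WithLp.equiv_symm_apply, heq] at hlin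
    rw [hFd]
    dsimp only
    convert hlin using 2 <;> simp [sphMap, hsA, hpA]
  have hFnormEq : ∀ t : ℝ, ‖Fd t‖ = 2 * ‖a' t‖ / sA t := by
    intro t
    rw [hFd]
    exact Fnorm (A t) (a' t) (sA t) (pA t) rfl rfl
  -- the comparison function
  set B : ℝ → ℝ := fun u => M*(Real.log (1+u*r) - Real.log (1-u*r)) with hB
  set Bp : ℝ → ℝ := fun u => M*(r/(1+u*r) + r/(1-u*r)) with hBp
  have hposBden : ∀ t : ℝ, t ∈ Icc (0:ℝ) 1 → 0 < 1 + t*r ∧ 0 < 1 - t*r := by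
    intro t ht
    have htr : t*r < 1 := lt_of_le_of_lt (mul_le_of_le_one_left hr0 ht.2) hr1
    have htr0 : 0 ≤ t*r := mul_nonneg ht.1 hr0
    constructor <;> linarith
  have hBder : ∀ t : ℝ, t ∈ Icc (0:ℝ) 1 → HasDerivAt B (Bp t) t := by
    intro t ht
    obtain ⟨hp1, hp2⟩ := hposBden t ht
    have h4 : HasDerivAt (fun u:ℝ => 1+u*r) r t := by
      simpa using ((hasDerivAt_id t).mul_const r).const_add 1
    have h5 : HasDerivAt (fun u:ℝ => 1-u*r) (-r) t := by
      simpa using ((hasDerivAt_id t).mul_const r).const_sub 1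
    have h6 := ((h4.log (ne_of_gt hp1)).sub (h5.log (ne_of_gt hp2))).const_mul M
    rw [hB, hBp]
    refine h6.congr_deriv ?_
    ring
  -- the bound on the derivative
  have hbound : ∀ t : ℝ, t ∈ Icc (0:ℝ) 1 → ‖Fd t‖ ≤ Bp t := by
    intro t ht
    obtain ⟨hp1, hp2⟩ := hposBden t ht
    have hP : 0 < (1+t*r)*(1-t*r) := mul_pos hp1 hp2
    have hsApos' := hsApos t
    rw [hFnormEq t]
    -- |a' t| ≤ S * |geoD|
    set S : ℝ := ‖deriv h (geo z ζ₀ t)‖ + ‖deriv g (geo z ζ₀ t)‖ with hS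
    have hS0 : 0 ≤ S := by positivity
    have h1 : ‖a' t‖ ≤ S * ‖geoD z ζ₀ t‖ := by
      rw [ha']
      dsimp only
      refine le_trans (norm_add_le _ _) (le_of_eq ?_)
      rw [Complex.norm_conj, norm_mul, norm_mul, hS]
      ring
    -- nQuot bound
    have hq0 := hM (geo z ζ₀ t) (hmem t ht)
    rw [nQuot] at hq0
    have hgeoabssq : ‖geo z ζ₀ t‖^2 = Complex.normSq (geo z ζ₀ t) :=
      Complex.sq_norm _
    have hAabssq : 1 + ‖harmMap h g (geo z ζ₀ t)‖^2 = sA t := by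
      rw [hsA]
      dsimp only
      rw [hA]
      dsimp only
      rw [Complex.sq_norm]
      ring
    rw [hgeoabssq, hAabssq] at hq0
    have hq1 : (1 - Complex.normSq (geo z ζ₀ t)) * S ≤ M * sA t := by
      rw [div_le_iff₀ hsApos'] at hq0
      rw [hS]
      exact hq0
    -- key identity
    have e3 : ‖geoD z ζ₀ t‖ * ((1+t*r)*(1-t*r))
        = r * (1 - Complex.normSq (geo z ζ₀ t)) := by
      rw [habs_geoD t, honesub t ht]
      have hd := hdenpos t ht
      field_simp
      ring
    have hsum : r/(1+t*r) + r/(1-t*r) = 2*r/((1+t*r)*(1-t*r)) := by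
      rw [div_add_div _ _ (ne_of_gt hp1) (ne_of_gt hp2)]
      congr 1
      ring
    rw [hBp]
    dsimp only
    rw [hsum, mul_div_assoc', div_le_div_iff₀ hsApos' hP]
    -- final chain
    have k1 : ‖a' t‖ * ((1+t*r)*(1-t*r))
        ≤ S * ‖geoD z ζ₀ t‖ * ((1+t*r)*(1-t*r)) :=
      mul_le_mul_of_nonneg_right h1 hP.le
    have k2 : S * ‖geoD z ζ₀ t‖ * ((1+t*r)*(1-t*r))
        = r * ((1 - Complex.normSq (geo z ζ₀ t)) * S) := by
      rw [mul_assoc, e3]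
      ring
    have k3 : r * ((1 - Complex.normSq (geo z ζ₀ t)) * S) ≤ r * (M * sA t) :=
      mul_le_mul_of_nonneg_left hq1 hr0
    linarith [k1, k2, k3]
  -- mean value inequality
  have hFc : ContinuousOn (fun u => sphMap (A u) - sphMap (A 0)) (Icc (0:ℝ) 1) := by
    intro t ht
    exact (((hFder t ht).continuousAt).continuousWithinAt).sub continuousWithinAt_const
  have hBc : ContinuousOn B (Icc (0:ℝ) 1) := by
    intro t ht
    exact ((hBder t ht).continuousAt).continuousWithinAt
  have hstart : ‖(fun u => sphMap (A u) - sphMap (A 0)) 0‖ ≤ B 0 := by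
    simp [hB]
  have mvt := image_norm_le_of_norm_deriv_right_le_deriv_boundary' hFc
    (fun x hx => (((hFder x (Ico_subset_Icc_self hx)).sub_const (sphMap (A 0))).hasDerivWithinAt))
    hstart hBc
    (fun x hx => ((hBder x (Ico_subset_Icc_self hx)).hasDerivWithinAt))
    (fun x hx => hbound x (Ico_subset_Icc_self hx))
    (right_mem_Icc.mpr zero_le_one)
  -- conclusion
  have hA0 : A 0 = harmMap h g z := by rw [hA]; dsimp only; rw [hend0]
  have hA1 : A 1 = harmMap h g w := by rw [hA]; dsimp only; rw [hend1]
  have hfinal : ‖sphMap (A 1) - sphMap (A 0)‖ ≤ M*(Real.log (1+r) - Real.log (1-r)) := by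
    simpa [hB] using mvt
  rw [chordal_eq, ← hA0, ← hA1, hhyp]
  rw [norm_sub_rev]
  linarith [hfinal]

lemma hypr_lt_one {z w : ℂ} (hz1 : ‖z‖ < 1) (hw1 : ‖w‖ < 1) :
    ‖(z - w) / (1 - (starRingEnd ℂ) z * w)‖ < 1 := by
  have hd0 : (1:ℂ) - (starRingEnd ℂ) z * w ≠ 0 := by
    intro hcon
    apply den_ne_zero (ζ := -w) hz1 (by simpa using hw1.le)
    linear_combination hcon
  rw [norm_div, div_lt_one (norm_pos_iff.mpr hd0)]
  have key := mobius_normSq z (-w)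
  have e1 : (1:ℂ) + (starRingEnd ℂ) z*(-w) = 1 - (starRingEnd ℂ) z*w := by ring
  have e2 : -w + z = -(w - z) := by ring
  simp only [e1, e2, Complex.normSq_neg] at key
  have hnz := normSq_lt_one hz1
  have hnw := normSq_lt_one hw1
  have hzw : Complex.normSq (z - w) = Complex.normSq (w - z) := by
    rw [show z - w = -(w-z) by ring, Complex.normSq_neg]
  have hlt : Complex.normSq (z - w) < Complex.normSq (1 - (starRingEnd ℂ) z*w) := by
    rw [hzw]
    nlinarith
  rw [Complex.norm_def, Complex.norm_def]
  exact Real.sqrt_lt_sqrt (Complex.normSq_nonneg _) hlt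

theorem normal_of_harmNorm_lt_top (h g : ℂ → ℂ)
    (hh : DifferentiableOn ℂ h 𝔻) (hg : DifferentiableOn ℂ g 𝔻)
    (hfin : harmNorm h g ≠ ⊤) :
    (∀ z ∈ 𝔻, ∀ w ∈ 𝔻,
      chordal (harmMap h g z) (harmMap h g w) ≤ (harmNorm h g).toReal * hypDist z w) ∧
    ∃ M : ℝ, ∀ z ∈ 𝔻, ∀ w ∈ 𝔻, z ≠ w →
      chordal (harmMap h g z) (harmMap h g w) / hypDist z w ≤ M := by
  set M := (harmNorm h g).toReal with hMdef
  have hMb : ∀ ζ ∈ 𝔻, nQuot h g ζ ≤ M := by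
    intro ζ hζ
    have h1 : ENNReal.ofReal (nQuot h g ζ) ≤ harmNorm h g :=
      le_iSup₂ (f := fun z (_ : z ∈ 𝔻) => ENNReal.ofReal (nQuot h g z)) ζ hζ
    have h2 := ENNReal.toReal_mono hfin h1
    rwa [ENNReal.toReal_ofReal (nQuot_nonneg h g hζ)] at h2
  have main : ∀ z ∈ 𝔻, ∀ w ∈ 𝔻,
      chordal (harmMap h g z) (harmMap h g w) ≤ M * hypDist z w :=
    fun z hz w hw => main_ineq h g hh hg M hMb hz hw
  refine ⟨main, M, fun z hz w hw hne => ?_⟩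
  have hz1 : ‖z‖ < 1 := by
    simpa using mem_ball_zero_iff.mp hz
  have hw1 : ‖w‖ < 1 := by
    simpa using mem_ball_zero_iff.mp hw
  have hd0 : (1:ℂ) - (starRingEnd ℂ) z * w ≠ 0 := by
    intro hcon
    apply den_ne_zero (ζ := -w) hz1 (by simpa using hw1.le)
    linear_combination hcon
  set rr := ‖(z - w) / (1 - (starRingEnd ℂ) z * w)‖ with hrr
  have hrpos : 0 < rr := by
    rw [hrr]
    apply norm_pos_iff.mpr
    exact div_ne_zero (sub_ne_zero.mpr hne) hd0
  have hrlt : rr < 1 := hypr_lt_one hz1 hw1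
  have hρ : 0 < hypDist z w := by
    rw [hypDist, ← hrr]
    have h2 : (1:ℝ) < (1 + rr)/(1 - rr) := by
      rw [lt_div_iff₀ (by linarith)]
      linarith
    have := Real.log_pos h2
    linarith
  rw [div_le_iff₀ hρ]
  exact main z hz w hw
end
end

section
/- Let f = h + conj(g) be a normal harmonic mapping on the unit disk 𝔻 and let A(w) = a·w + b·conj(w) with a, b ∈ ℂ and |a| ≠ |b|. Then A∘f, which is the harmonic mapping H + conj(G) with H = a·h + b·g and G = conj(b)·h + conj(a)·g, is normal, i.e. ‖A∘f‖_n < ∞. In particular, the class of all normal harmonic mappings on 𝔻 is an affine and linearly invariant family. -/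
open Complex Metric Set ENNReal Filter

noncomputable section

theorem affine_of_normal (h g : ℂ → ℂ)
    (hh : DifferentiableOn ℂ h 𝔻) (hg : DifferentiableOn ℂ g 𝔻)
    (hf : harmNorm h g < ⊤) (a b : ℂ) (hab : ‖a‖ ≠ ‖b‖) :
    harmNorm (fun z => a * h z + b * g z)
      (fun z => (starRingEnd ℂ) b * h z + (starRingEnd ℂ) a * g z) < ⊤ := by
  set c : ℝ := |‖a‖ - ‖b‖| with hc_def
  have hc : 0 < c := abs_pos.mpr (sub_ne_zero.mpr hab)
  set m : ℝ := min 1 (c ^ 2) with hm_def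
  have hm : 0 < m := lt_min one_pos (by positivity)
  set C : ℝ := ‖a‖ + ‖b‖ with hC_def
  have hC : 0 ≤ C := by positivity
  have hK : 0 ≤ C / m := by positivity
  have key : ∀ z ∈ 𝔻, nQuot (fun z => a * h z + b * g z)
      (fun z => (starRingEnd ℂ) b * h z + (starRingEnd ℂ) a * g z) z ≤ (C / m) * nQuot h g z := by
    intro z hz
    have hz1 : ‖z‖ < 1 := by simpa [unitDisk] using mem_ball_zero_iff.mp hz
    have hzd : (0:ℝ) ≤ 1 - ‖z‖ ^ 2 := by nlinarith [norm_nonneg z]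
    have hDh : DifferentiableAt ℂ h z := hh.differentiableAt ((Metric.isOpen_ball).mem_nhds hz)
    have hDg : DifferentiableAt ℂ g z := hg.differentiableAt ((Metric.isOpen_ball).mem_nhds hz)
    have hdH : deriv (fun z => a * h z + b * g z) z = a * deriv h z + b * deriv g z := by
      rw [deriv_fun_add (hDh.const_mul a) (hDg.const_mul b), deriv_const_mul a hDh,
        deriv_const_mul b hDg]
    have hdG : deriv (fun z => (starRingEnd ℂ) b * h z + (starRingEnd ℂ) a * g z) z
        = (starRingEnd ℂ) b * deriv h z + (starRingEnd ℂ) a * deriv g z := by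
      rw [deriv_fun_add (hDh.const_mul _) (hDg.const_mul _), deriv_const_mul _ hDh,
        deriv_const_mul _ hDg]
    set w : ℂ := harmMap h g z with hw
    have hw' : harmMap (fun z => a * h z + b * g z)
        (fun z => (starRingEnd ℂ) b * h z + (starRingEnd ℂ) a * g z) z
        = a * w + b * (starRingEnd ℂ) w := by
      simp only [harmMap, hw, map_add, map_mul, RingHomCompTriple.comp_apply,
        Complex.conj_conj, RingHom.id_apply]
      ring
    -- lower bound on |a w + b conj w|
    have h1 := norm_add_le (a * w + b * (starRingEnd ℂ) w) (-(b * (starRingEnd ℂ) w))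
    have h2 := norm_add_le (a * w + b * (starRingEnd ℂ) w) (-(a * w))
    simp only [add_neg_cancel_right, norm_neg, norm_mul, Complex.norm_conj] at h1 h2
    rw [← sub_eq_add_neg] at h2
    have h2' : ‖a * w + b * (starRingEnd ℂ) w - a * w‖
        = ‖b‖ * ‖w‖ := by
      simp [map_mul]
    have hlow : c * ‖w‖ ≤ ‖a * w + b * (starRingEnd ℂ) w‖ := by
      rw [hc_def]
      rcases abs_cases (‖a‖ - ‖b‖) with ⟨he, _⟩ | ⟨he, _⟩ <;> rw [he] <;>
        nlinarith [norm_nonneg w, h2'.symm.trans_le h2]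
    have hden : m * (1 + ‖w‖ ^ 2)
        ≤ 1 + ‖a * w + b * (starRingEnd ℂ) w‖ ^ 2 := by
      have hsq : (c * ‖w‖) ^ 2 ≤ ‖a * w + b * (starRingEnd ℂ) w‖ ^ 2 :=
        pow_le_pow_left₀ (by positivity) hlow 2
      have hm1 : m ≤ 1 := min_le_left _ _
      have hm2 : m ≤ c ^ 2 := min_le_right _ _
      nlinarith [norm_nonneg w, sq_nonneg (‖w‖)]
    -- numerator bound
    have hnum : ‖deriv (fun z => a * h z + b * g z) z‖
        + ‖deriv (fun z => (starRingEnd ℂ) b * h z + (starRingEnd ℂ) a * g z) z‖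
        ≤ C * (‖deriv h z‖ + ‖deriv g z‖) := by
      rw [hdH, hdG]
      have e1 := norm_add_le (a * deriv h z) (b * deriv g z)
      have e2 := norm_add_le ((starRingEnd ℂ) b * deriv h z)
        ((starRingEnd ℂ) a * deriv g z)
      simp only [norm_mul, Complex.norm_conj] at e1 e2
      rw [hC_def]; nlinarith
    have hDpos : (0:ℝ) < 1 + ‖w‖ ^ 2 := by positivity
    have hNnn : 0 ≤ C * ((1 - ‖z‖ ^ 2) *
        (‖deriv h z‖ + ‖deriv g z‖)) := by positivity
    calc nQuot (fun z => a * h z + b * g z)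
          (fun z => (starRingEnd ℂ) b * h z + (starRingEnd ℂ) a * g z) z
        ≤ (C * ((1 - ‖z‖ ^ 2) *
            (‖deriv h z‖ + ‖deriv g z‖))) /
          (m * (1 + ‖w‖ ^ 2)) := by
          rw [nQuot, hw']
          apply div_le_div₀ hNnn _ (by positivity) hden
          nlinarith [norm_nonneg (deriv (fun z => a * h z + b * g z) z),
            norm_nonneg (deriv (fun z => (starRingEnd ℂ) b * h z + (starRingEnd ℂ) a * g z) z)]
      _ = (C / m) * nQuot h g z := by
          rw [nQuot, ← hw]
          field_simp
  have hfin : ENNReal.ofReal (C / m) * harmNorm h g < ⊤ :=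
    ENNReal.mul_lt_top ENNReal.ofReal_lt_top hf
  refine lt_of_le_of_lt ?_ hfin
  rw [harmNorm]
  refine iSup₂_le fun z hz => ?_
  calc ENNReal.ofReal (nQuot (fun z => a * h z + b * g z)
        (fun z => (starRingEnd ℂ) b * h z + (starRingEnd ℂ) a * g z) z)
      ≤ ENNReal.ofReal ((C / m) * nQuot h g z) := ENNReal.ofReal_le_ofReal (key z hz)
    _ = ENNReal.ofReal (C / m) * ENNReal.ofReal (nQuot h g z) := ENNReal.ofReal_mul hK
    _ ≤ ENNReal.ofReal (C / m) * harmNorm h g := by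
        gcongr
        exact le_iSup₂ (f := fun z (_ : z ∈ 𝔻) => ENNReal.ofReal (nQuot h g z)) z hz
end
end

section
/- The harmonic mapping L(z) = Re(z/(1−z)) + i·Im(z/(1−z)²) on the unit disk 𝔻, whose canonical decomposition is L = h + conj(g) with h(z) = z(2−z)/(2(1−z)²) and g(z) = −z²/(2(1−z)²), is normal; that is, ‖L‖_n = sup_{z ∈ 𝔻} (1−|z|²)·(|h′(z)|+|g′(z)|)/(1+|L(z)|²) < ∞. -/
open Complex Metric Set ENNReal Filter

noncomputable section

lemma mapEq' (z : ℂ) (hz1 : (1:ℂ) - z ≠ 0) (hz2 : (1:ℂ) - (starRingEnd ℂ) z ≠ 0) :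
    z * (2 - z) / (2 * (1 - z) ^ 2) + (starRingEnd ℂ) (-z ^ 2 / (2 * (1 - z) ^ 2)) =
      (((z / (1 - z)).re : ℂ) + Complex.I * ((z / (1 - z) ^ 2).im : ℂ)) := by
  rw [Complex.re_eq_add_conj, Complex.im_eq_sub_conj]
  simp only [map_div₀, map_neg, map_pow, map_sub, map_one, map_mul, map_ofNat]
  field_simp [hz1, hz2]
  ring

lemma hasDerivAt_h' (z : ℂ) (hz : (1:ℂ) - z ≠ 0) :
    HasDerivAt (fun w : ℂ => w * (2 - w) / (2 * (1 - w) ^ 2)) (1/(1-z)^3) z := by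
  have hn : HasDerivAt (fun w : ℂ => w * (2 - w)) (1 * (2 - z) + z * (0 - 1)) z :=
    (hasDerivAt_id z).mul ((hasDerivAt_const z 2).sub (hasDerivAt_id z))
  have hd : HasDerivAt (fun w : ℂ => 2 * (1 - w) ^ 2)
      (2 * ((2 : ℕ) * (1 - z) ^ 1 * (0 - 1))) z :=
    (((hasDerivAt_const z 1).sub (hasDerivAt_id z)).pow 2).const_mul 2
  have hden : 2 * (1 - z) ^ 2 ≠ 0 := by simp [hz]
  have := hn.div hd hden
  refine this.congr_deriv ?_
  rw [div_eq_div_iff (pow_ne_zero 2 hden) (pow_ne_zero 3 hz)]; push_cast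
  ring

lemma hasDerivAt_g' (z : ℂ) (hz : (1:ℂ) - z ≠ 0) :
    HasDerivAt (fun w : ℂ => -w ^ 2 / (2 * (1 - w) ^ 2)) (-z/(1-z)^3) z := by
  have hn : HasDerivAt (fun w : ℂ => -w ^ 2) (-((2:ℕ) * z ^ 1 * 1)) z :=
    ((hasDerivAt_id z).pow 2).neg
  have hd : HasDerivAt (fun w : ℂ => 2 * (1 - w) ^ 2)
      (2 * ((2 : ℕ) * (1 - z) ^ 1 * (0 - 1))) z :=
    (((hasDerivAt_const z 1).sub (hasDerivAt_id z)).pow 2).const_mul 2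
  have hden : 2 * (1 - z) ^ 2 ≠ 0 := by simp [hz]
  have := hn.div hd hden
  refine this.congr_deriv ?_
  rw [div_eq_div_iff (pow_ne_zero 2 hden) (pow_ne_zero 3 hz)]; push_cast
  ring

lemma keyineq (a b s az : ℝ) (hs : 0 < s)
    (haz : 0 ≤ az) (haz1 : az < 1)
    (e1 : 1 - az ^ 2 = (2 * a - 1) * s ^ 2)
    (hinv : 1 ≤ s * (a + |b|)) :
    (1 - az ^ 2) * (1 / s ^ 3 + az / s ^ 3) / (1 + (a - 1) ^ 2 + (2 * a * b - b) ^ 2) ≤ 9 := by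
  have hb : 0 ≤ |b| := abs_nonneg b
  have hb2 : |b| ^ 2 = b ^ 2 := sq_abs b
  have ha : 1 / 2 < a := by nlinarith [sq_nonneg s, mul_pos hs hs]
  have h2a : (0:ℝ) < 2 * a - 1 := by linarith
  have hden : (0:ℝ) < 1 + (a - 1) ^ 2 + (2 * a * b - b) ^ 2 := by positivity
  rw [div_le_iff₀ hden, e1]
  have hfe : (2 * a - 1) * s ^ 2 * (1 / s ^ 3 + az / s ^ 3) = (2 * a - 1) * (1 + az) / s := by
    field_simp
  rw [hfe, div_le_iff₀ hs]
  have hfac : 1 + az ≤ 2 * (s * (a + |b|)) := by linarith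
  have step : (2 * a - 1) * (1 + az) ≤ (2 * a - 1) * (2 * (s * (a + |b|))) :=
    mul_le_mul_of_nonneg_left hfac h2a.le
  have main : (2 * a - 1) * (2 * (a + |b|)) ≤ 9 * (1 + (a - 1) ^ 2 + (2 * a * b - b) ^ 2) := by
    nlinarith [sq_nonneg ((2 * a - 1) * |b| - 1), sq_nonneg (2 * a - 7 / 2), hb2, h2a, hb]
  nlinarith [main, step, hs, mul_le_mul_of_nonneg_right main hs.le]

set_option maxHeartbeats 1000000 in
theorem normal_halfplane_map :
    let h : ℂ → ℂ := fun z => z * (2 - z) / (2 * (1 - z) ^ 2)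
    let g : ℂ → ℂ := fun z => -z ^ 2 / (2 * (1 - z) ^ 2)
    (∀ z ∈ 𝔻, harmMap h g z =
      (((z / (1 - z)).re : ℂ) + Complex.I * ((z / (1 - z) ^ 2).im : ℂ))) ∧
    harmNorm h g < ⊤ := by
  intro h g
  have hne : ∀ z ∈ 𝔻, (1:ℂ) - z ≠ 0 := by
    intro z hz h0
    have : z = 1 := by linear_combination -h0
    rw [this] at hz
    simp [unitDisk] at hz
  have hne' : ∀ z ∈ 𝔻, (1:ℂ) - (starRingEnd ℂ) z ≠ 0 := by
    intro z hz h0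
    have hz1 : ‖z‖ < 1 := by simpa [unitDisk] using hz
    have : (starRingEnd ℂ) z = 1 := by linear_combination -h0
    have : ‖z‖ = 1 := by
      rw [← Complex.norm_conj, this]; simp
    linarith
  have key1 : ∀ z ∈ 𝔻, harmMap h g z =
      (((z / (1 - z)).re : ℂ) + Complex.I * ((z / (1 - z) ^ 2).im : ℂ)) := by
    intro z hz
    exact mapEq' z (hne z hz) (hne' z hz)
  refine ⟨key1, ?_⟩
  have bound : ∀ z ∈ 𝔻, nQuot h g z ≤ 9 := by
    intro z hz
    have hz1 : (1:ℂ) - z ≠ 0 := hne z hz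
    have hazlt : ‖z‖ < 1 := by simpa [unitDisk] using hz
    have hs : 0 < ‖1 - z‖ := by
      simpa using (norm_pos_iff.mpr hz1)
    set s := ‖1 - z‖ with hs_def
    set v : ℂ := (1 - z)⁻¹ with hv
    set a := v.re with ha_def
    set b := v.im with hb_def
    -- derivatives
    have hdh : deriv h z = 1 / (1 - z) ^ 3 := (hasDerivAt_h' z hz1).deriv
    have hdg : deriv g z = -z / (1 - z) ^ 3 := (hasDerivAt_g' z hz1).deriv
    -- numerator pieces
    have habsdh : ‖deriv h z‖ = 1 / s ^ 3 := by
      rw [hdh]; simp [map_div₀, map_pow, hs_def]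
    have habsdg : ‖deriv g z‖ = ‖z‖ / s ^ 3 := by
      rw [hdg]; simp [map_div₀, map_pow, hs_def]
    -- e1
    have hnsq : Complex.normSq (1 - z) ≠ 0 := by
      simpa [Complex.normSq_eq_zero] using hz1
    have e1 : 1 - ‖z‖ ^ 2 = (2 * a - 1) * s ^ 2 := by
      rw [ha_def, hv, Complex.inv_re, Complex.sq_norm, Complex.sq_norm]
      field_simp
      simp [Complex.normSq_apply, Complex.sub_re, Complex.sub_im]
      ring
    -- hinv
    have hinv : 1 ≤ s * (a + |b|) := by
      have h1 : s * ‖v‖ = 1 := by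
        rw [hs_def, hv, ← norm_mul, mul_inv_cancel₀ hz1, norm_one]
      have h2 : ‖v‖ ≤ |a| + |b| := Complex.norm_le_abs_re_add_abs_im v
      have ha' : 1 / 2 < a := by
        nlinarith [sq_nonneg s, mul_pos hs hs, hazlt, norm_nonneg z, e1]
      have : |a| = a := abs_of_pos (by linarith)
      calc 1 = s * ‖v‖ := h1.symm
        _ ≤ s * (|a| + |b|) := by
            exact mul_le_mul_of_nonneg_left h2 hs.le
        _ = s * (a + |b|) := by rw [this]
    -- denominator
    have hwre : (z / (1 - z)).re = a - 1 := by
      have : z / (1 - z) = v - 1 := by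
        rw [hv]; field_simp; ring
      rw [this]; simp [ha_def]
    have huim : (z / (1 - z) ^ 2).im = 2 * a * b - b := by
      have : z / (1 - z) ^ 2 = v * v - v := by
        rw [hv, div_eq_iff (pow_ne_zero 2 hz1)]
        field_simp
        try ring
        try tauto
      rw [this]; simp [Complex.sub_im, Complex.mul_im, ha_def, hb_def]; ring
    have hfabs : ‖harmMap h g z‖ ^ 2 = (a - 1) ^ 2 + (2 * a * b - b) ^ 2 := by
      rw [key1 z hz, hwre, huim, Complex.sq_norm]
      simp [Complex.normSq_apply, Complex.add_re, Complex.add_im, Complex.mul_re,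
        Complex.mul_im, Complex.I_re, Complex.I_im, Complex.ofReal_re, Complex.ofReal_im]
      ring
    have : nQuot h g z =
        (1 - ‖z‖ ^ 2) * (1 / s ^ 3 + ‖z‖ / s ^ 3) /
          (1 + (a - 1) ^ 2 + (2 * a * b - b) ^ 2) := by
      rw [nQuot, habsdh, habsdg, hfabs]
      ring_nf
    rw [this]
    exact keyineq a b s ‖z‖ hs (norm_nonneg z) hazlt e1 hinv
  calc harmNorm h g ≤ ENNReal.ofReal 9 := by
        refine iSup₂_le fun z hz => ?_
        exact ENNReal.ofReal_le_ofReal (bound z hz)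
    _ < ⊤ := ENNReal.ofReal_lt_top
end
end

section
/- Let f = h + conj(g) be a harmonic mapping on the unit disk 𝔻 with |f(z)| ≤ k for all z ∈ 𝔻, for some constant k > 0. Then the analytic function h is normal, i.e. sup_{z ∈ 𝔻} (1−|z|²)·|h′(z)|/(1+|h(z)|²) < ∞; and likewise the analytic function g is normal. -/
open Complex Metric Set ENNReal Filter

noncomputable section

/-- A holomorphic function on the disk with bounded real part has
`(1-|z|²)|p'(z)|` bounded. -/
lemma bddRe_deriv_bound (p : ℂ → ℂ) (hp : DifferentiableOn ℂ p 𝔻)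
    (k : ℝ) (hk : 0 ≤ k) (hb : ∀ z ∈ 𝔻, |(p z).re| ≤ k) :
    ∀ z ∈ 𝔻, (1 - ‖z‖ ^ 2) * ‖deriv p z‖ ≤
      6 * Real.exp (2 * k) := by
  intro z hz
  have hzlt : ‖z‖ < 1 := by
    simpa [unitDisk, Complex.dist_eq] using hz
  set r : ℝ := 1 - ‖z‖ with hr_def
  have hr : 0 < r := by simp [hr_def]; linarith
  set F : ℂ → ℂ := fun w => Complex.exp (p w) with hF_def
  have hFdiff : DifferentiableOn ℂ F 𝔻 := hp.cexp
  have hsub : Metric.ball z r ⊆ 𝔻 := by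
    apply Metric.ball_subset_ball'
    simp [hr_def, Complex.dist_eq]
  have hFbound : ∀ w ∈ 𝔻, ‖F w‖ ≤ Real.exp k := by
    intro w hw
    rw [hF_def]
    simp only [Complex.norm_exp]
    exact Real.exp_le_exp.2 ((le_abs_self _).trans (hb w hw))
  have hmaps : Set.MapsTo F (Metric.ball z r) (Metric.ball (F z) (3 * Real.exp k)) := by
    intro w hw
    have h1 : ‖F w - F z‖ ≤ 2 * Real.exp k := by
      calc ‖F w - F z‖ ≤ ‖F w‖ + ‖F z‖ := by
            simpa using norm_sub_le (F w) (F z)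
        _ ≤ 2 * Real.exp k := by
            have := hFbound w (hsub hw)
            have := hFbound z hz
            linarith
    have h2 : (2 : ℝ) * Real.exp k < 3 * Real.exp k := by
      have := Real.exp_pos k; linarith
    simp only [Metric.mem_ball, Complex.dist_eq]
    exact lt_of_le_of_lt h1 h2
  have hderivF : ‖deriv F z‖ ≤ 3 * Real.exp k / r :=
    Complex.norm_deriv_le_div_of_mapsTo_ball (hFdiff.mono hsub) (hmaps.mono_right Metric.ball_subset_closedBall) hr
  -- deriv F z = exp (p z) * deriv p z
  have hpz : DifferentiableAt ℂ p z :=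
    hp.differentiableAt (Metric.isOpen_ball.mem_nhds hz)
  have hFz : deriv F z = Complex.exp (p z) * deriv p z := by
    have := hpz.hasDerivAt.cexp
    simpa [hF_def] using this.deriv
  have habsexp : Real.exp (-k) ≤ ‖Complex.exp (p z)‖ := by
    simp only [Complex.norm_exp]
    exact Real.exp_le_exp.2 (neg_le_of_abs_le (hb z hz))
  have hderivp : ‖deriv p z‖ ≤ 3 * Real.exp k / r * Real.exp k := by
    have hexp_pos : (0 : ℝ) < ‖Complex.exp (p z)‖ :=
      lt_of_lt_of_le (Real.exp_pos _) habsexp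
    have h1 : ‖Complex.exp (p z)‖ * ‖deriv p z‖ ≤
        3 * Real.exp k / r := by
      rw [← norm_mul, ← hFz]; exact hderivF
    have h2 : Real.exp (-k) * ‖deriv p z‖ ≤ 3 * Real.exp k / r :=
      le_trans (mul_le_mul_of_nonneg_right habsexp (norm_nonneg _)) h1
    have h3 : ‖deriv p z‖ ≤ 3 * Real.exp k / r / Real.exp (-k) := by
      rw [le_div_iff₀ (Real.exp_pos _)]; linarith [h2]
    calc ‖deriv p z‖ ≤ 3 * Real.exp k / r / Real.exp (-k) := h3
      _ = 3 * Real.exp k / r * Real.exp k := by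
          rw [div_eq_mul_inv (3 * Real.exp k / r), ← Real.exp_neg]; ring_nf
  have hfac : (1 : ℝ) - ‖z‖ ^ 2 ≤ 2 * r := by
    have h0 := norm_nonneg z
    nlinarith
  have hdp0 : 0 ≤ ‖deriv p z‖ := norm_nonneg _
  calc (1 - ‖z‖ ^ 2) * ‖deriv p z‖
      ≤ 2 * r * ‖deriv p z‖ := by
        apply mul_le_mul_of_nonneg_right hfac hdp0
    _ ≤ 2 * r * (3 * Real.exp k / r * Real.exp k) := by
        apply mul_le_mul_of_nonneg_left hderivp; linarith
    _ = 6 * (Real.exp k * Real.exp k) := by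
        field_simp; ring
    _ = 6 * Real.exp (2 * k) := by rw [← Real.exp_add]; ring_nf

theorem analytic_parts_normal_of_bounded (h g : ℂ → ℂ)
    (hh : DifferentiableOn ℂ h 𝔻) (hg : DifferentiableOn ℂ g 𝔻)
    (k : ℝ) (hk : 0 < k) (hbound : ∀ z ∈ 𝔻, ‖harmMap h g z‖ ≤ k) :
    (∃ M : ℝ, ∀ z ∈ 𝔻,
      (1 - ‖z‖ ^ 2) * ‖deriv h z‖ / (1 + ‖h z‖ ^ 2) ≤ M) ∧
    (∃ M : ℝ, ∀ z ∈ 𝔻,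
      (1 - ‖z‖ ^ 2) * ‖deriv g z‖ / (1 + ‖g z‖ ^ 2) ≤ M) := by
  set p : ℂ → ℂ := fun z => h z + g z with hp_def
  set q : ℂ → ℂ := fun z => Complex.I * (h z - g z) with hq_def
  have hpdiff : DifferentiableOn ℂ p 𝔻 := hh.add hg
  have hqdiff : DifferentiableOn ℂ q 𝔻 :=
    (differentiableOn_const _).mul (hh.sub hg)
  have hpRe : ∀ z ∈ 𝔻, |(p z).re| ≤ k := by
    intro z hz
    have : (p z).re = (harmMap h g z).re := by
      simp [hp_def, harmMap, Complex.add_re, Complex.conj_re]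
    rw [this]
    exact (Complex.abs_re_le_norm _).trans (hbound z hz)
  have hqRe : ∀ z ∈ 𝔻, |(q z).re| ≤ k := by
    intro z hz
    have hq : (q z).re = -(harmMap h g z).im := by
      simp [hq_def, harmMap, Complex.add_im, Complex.conj_im, Complex.mul_re,
        Complex.sub_im, Complex.sub_re]
      ring
    rw [hq, abs_neg]
    exact (Complex.abs_im_le_norm _).trans (hbound z hz)
  have hkk : (0 : ℝ) ≤ k := le_of_lt hk
  have hpB := bddRe_deriv_bound p hpdiff k hkk hpRe
  have hqB := bddRe_deriv_bound q hqdiff k hkk hqRe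
  -- derivative relations
  have hderiv : ∀ z ∈ 𝔻, deriv p z = deriv h z + deriv g z ∧
      deriv q z = Complex.I * (deriv h z - deriv g z) := by
    intro z hz
    have hop : IsOpen 𝔻 := Metric.isOpen_ball
    have hhz : DifferentiableAt ℂ h z := hh.differentiableAt (hop.mem_nhds hz)
    have hgz : DifferentiableAt ℂ g z := hg.differentiableAt (hop.mem_nhds hz)
    constructor
    · exact (hhz.hasDerivAt.add hgz.hasDerivAt).deriv
    · exact ((hhz.hasDerivAt.sub hgz.hasDerivAt).const_mul Complex.I).deriv
  have key : ∀ z ∈ 𝔻,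
      (1 - ‖z‖ ^ 2) * ‖deriv h z‖ ≤ 6 * Real.exp (2 * k) ∧
      (1 - ‖z‖ ^ 2) * ‖deriv g z‖ ≤ 6 * Real.exp (2 * k) := by
    intro z hz
    obtain ⟨hdp, hdq⟩ := hderiv z hz
    have hzlt : ‖z‖ < 1 := by
      simpa [unitDisk, Complex.dist_eq] using hz
    have hpos : (0 : ℝ) ≤ 1 - ‖z‖ ^ 2 := by nlinarith [norm_nonneg z]
    have hqabs : ‖deriv q z‖ = ‖deriv h z - deriv g z‖ := by
      rw [hdq, norm_mul, Complex.norm_I, one_mul]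
    have hph : 2 * ‖deriv h z‖ ≤
        ‖deriv p z‖ + ‖deriv q z‖ := by
      rw [hdp, hqabs]
      have : (2 : ℂ) • deriv h z = (deriv h z + deriv g z) + (deriv h z - deriv g z) := by
        ring_nf
      calc 2 * ‖deriv h z‖ = ‖(deriv h z + deriv g z) +
            (deriv h z - deriv g z)‖ := by
            rw [show (deriv h z + deriv g z) + (deriv h z - deriv g z) = 2 * deriv h z by ring,
              norm_mul]
            simp
        _ ≤ _ := norm_add_le _ _
    have hpg : 2 * ‖deriv g z‖ ≤
        ‖deriv p z‖ + ‖deriv q z‖ := by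
      rw [hdp, hqabs]
      calc 2 * ‖deriv g z‖ = ‖(deriv h z + deriv g z) -
            (deriv h z - deriv g z)‖ := by
            rw [show (deriv h z + deriv g z) - (deriv h z - deriv g z) = 2 * deriv g z by ring,
              norm_mul]
            simp
        _ ≤ _ := norm_sub_le _ _
    have hP := hpB z hz
    have hQ := hqB z hz
    constructor
    · nlinarith
    · nlinarith
  have final : ∀ (u : ℂ → ℂ), (∀ z ∈ 𝔻,
      (1 - ‖z‖ ^ 2) * ‖deriv u z‖ ≤ 6 * Real.exp (2 * k)) →
      ∃ M : ℝ, ∀ z ∈ 𝔻,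
        (1 - ‖z‖ ^ 2) * ‖deriv u z‖ / (1 + ‖u z‖ ^ 2) ≤ M := by
    intro u hu
    refine ⟨6 * Real.exp (2 * k), fun z hz => ?_⟩
    have hzlt : ‖z‖ < 1 := by
      simpa [unitDisk, Complex.dist_eq] using hz
    have hnum : 0 ≤ (1 - ‖z‖ ^ 2) * ‖deriv u z‖ := by
      apply mul_nonneg _ (norm_nonneg _)
      nlinarith [norm_nonneg z]
    have hden : (1 : ℝ) ≤ 1 + ‖u z‖ ^ 2 := by
      nlinarith [norm_nonneg (u z)]
    exact (div_le_self hnum hden).trans (hu z hz)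
  exact ⟨final h (fun z hz => (key z hz).1), final g (fun z hz => (key z hz).2)⟩
end
end

section
/- Let h be an analytic univalent function on the unit disk 𝔻 with h(0) = 0 whose image h(𝔻) is starlike with respect to 0, and let g be analytic on 𝔻 with g(0) = 0 such that |g′(z)| ≤ c·|h′(z)| for all z ∈ 𝔻, where 0 ≤ c < 1. Then |g(z)| ≤ c·|h(z)| for all z ∈ 𝔻. -/
open Complex Metric Set ENNReal Filter
open scoped Topology

noncomputable section

theorem abs_le_of_starlike (h g : ℂ → ℂ)
    (hh : DifferentiableOn ℂ h 𝔻) (hg : DifferentiableOn ℂ g 𝔻)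
    (hinj : Set.InjOn h 𝔻) (h0 : h 0 = 0)
    (hstar : ∀ w ∈ h '' 𝔻, ∀ t : ℝ, t ∈ Set.Icc (0 : ℝ) 1 → (t : ℂ) * w ∈ h '' 𝔻)
    (g0 : g 0 = 0) (c : ℝ) (hc0 : 0 ≤ c) (hc1 : c < 1)
    (hd : ∀ z ∈ 𝔻, ‖deriv g z‖ ≤ c * ‖deriv h z‖) :
    ∀ z ∈ 𝔻, ‖g z‖ ≤ c * ‖h z‖ := by
  classical
  intro z hz
  set Ω : Set ℂ := h '' 𝔻 with hΩdef
  have hdisk_open : IsOpen 𝔻 := Metric.isOpen_ball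
  have han : AnalyticOnNhd ℂ h 𝔻 := hh.analyticOnNhd hdisk_open
  have h0mem : (0 : ℂ) ∈ 𝔻 := by simp [unitDisk]
  -- h is not locally constant at any point of 𝔻
  have hnotconst : ∀ z₀ ∈ 𝔻, ¬ (∀ᶠ x in 𝓝 z₀, h x = h z₀) := by
    intro z₀ hz₀ hcon
    obtain ⟨r, hr, hball⟩ := Metric.eventually_nhds_iff_ball.mp
      (hcon.and (hdisk_open.eventually_mem hz₀))
    have hmem : z₀ + ((r / 2 : ℝ) : ℂ) ∈ ball z₀ r := by
      simp only [mem_ball, dist_self_add_left, Complex.norm_real, Real.norm_eq_abs]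
      rw [abs_of_pos (by linarith)]; linarith
    have hne : z₀ + ((r / 2 : ℝ) : ℂ) ≠ z₀ := by
      intro hEq
      have : ((r / 2 : ℝ) : ℂ) = 0 := by linear_combination hEq
      simp at this; linarith
    exact hne (hinj (hball _ hmem).2 hz₀ (hball _ hmem).1)
  have hmap : ∀ z₀ ∈ 𝔻, 𝓝 (h z₀) ≤ Filter.map h (𝓝 z₀) := fun z₀ hz₀ =>
    ((han z₀ hz₀).eventually_constant_or_nhds_le_map_nhds).resolve_left (hnotconst z₀ hz₀)
  have himgnhds : ∀ z₀ ∈ 𝔻, ∀ V ∈ 𝓝 z₀, h '' (V ∩ 𝔻) ∈ 𝓝 (h z₀) := by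
    intro z₀ hz₀ V hV
    refine hmap z₀ hz₀ ?_
    refine Filter.mem_map.2 (Filter.mem_of_superset
      (Filter.inter_mem hV (hdisk_open.mem_nhds hz₀)) ?_)
    exact fun x hx => Set.mem_image_of_mem h hx
  set hinv : ℂ → ℂ := Function.invFunOn h 𝔻 with hinvdef
  have hleft : ∀ z₀ ∈ 𝔻, hinv (h z₀) = z₀ := fun z₀ hz₀ => hinj.leftInvOn_invFunOn hz₀
  have hright : ∀ w ∈ Ω, hinv w ∈ 𝔻 ∧ h (hinv w) = w := by
    rintro w ⟨ζ, hζ, rfl⟩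
    exact ⟨Function.invFunOn_mem ⟨ζ, hζ, rfl⟩, Function.invFunOn_eq ⟨ζ, hζ, rfl⟩⟩
  -- continuity of the inverse
  have hinvtendsto : ∀ z₀ ∈ 𝔻, Filter.Tendsto hinv (𝓝 (h z₀)) (𝓝 z₀) := by
    intro z₀ hz₀
    rw [Filter.tendsto_def]
    intro V hV
    refine Filter.mem_of_superset (himgnhds z₀ hz₀ V hV) ?_
    rintro w ⟨ζ, ⟨hζV, hζ𝔻⟩, rfl⟩
    simpa [hleft ζ hζ𝔻] using hζV
  have hinvcont : ∀ z₀ ∈ 𝔻, ContinuousAt hinv (h z₀) := by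
    intro z₀ hz₀
    have := hinvtendsto z₀ hz₀
    rwa [ContinuousAt, hleft z₀ hz₀]
  have hΩnhds : ∀ z₀ ∈ 𝔻, Ω ∈ 𝓝 (h z₀) := by
    intro z₀ hz₀
    have := himgnhds z₀ hz₀ Set.univ Filter.univ_mem
    simpa using this
  -- eventually, hinv is a genuine right inverse
  have hev : ∀ z₀ ∈ 𝔻, ∀ᶠ w in 𝓝 (h z₀), hinv w ∈ 𝔻 ∧ h (hinv w) = w := by
    intro z₀ hz₀
    exact Filter.eventually_of_mem (hΩnhds z₀ hz₀) (fun w hw => hright w hw)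
  -- good points: derivative of h is nonzero, F = g ∘ hinv differentiable there
  set F : ℂ → ℂ := fun w => g (hinv w) with hFdef
  have hF : ∀ z₀ ∈ 𝔻, deriv h z₀ ≠ 0 →
      HasDerivAt F (deriv g z₀ * (deriv h z₀)⁻¹) (h z₀) := by
    intro z₀ hz₀ hne
    obtain ⟨p, hp⟩ := han z₀ hz₀
    have hs : HasStrictDerivAt h (deriv h z₀) z₀ := by
      have hsd := hp.hasStrictDerivAt
      rwa [← hsd.hasDerivAt.deriv] at hsd
    have hleftev : ∀ᶠ x in 𝓝 z₀, hinv (h x) = x :=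
      (hdisk_open.eventually_mem hz₀).mono (fun x hx => hleft x hx)
    have hinvd : HasStrictDerivAt hinv (deriv h z₀)⁻¹ (h z₀) :=
      hs.to_local_left_inverse hne hleftev
    have gda : HasDerivAt g (deriv g z₀) z₀ :=
      (hg.differentiableAt (hdisk_open.mem_nhds hz₀)).hasDerivAt
    have gda' : HasDerivAt g (deriv g z₀) (hinv (h z₀)) := by
      rw [hleft z₀ hz₀]; exact gda
    exact gda'.comp (h z₀) hinvd.hasDerivAt
  -- zeros of deriv h are isolated
  have hiso : ∀ z₀ ∈ 𝔻, ∀ᶠ x in 𝓝[≠] z₀, deriv h x ≠ 0 := by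
    intro z₀ hz₀
    have hda : AnalyticAt ℂ (deriv h) z₀ := han.deriv z₀ hz₀
    rcases hda.eventually_eq_zero_or_eventually_ne_zero with hzero | hne
    · exfalso
      obtain ⟨r, hr, hball⟩ := Metric.eventually_nhds_iff_ball.mp
        (hzero.and (hdisk_open.eventually_mem hz₀))
      refine hnotconst z₀ hz₀ ?_
      have hconst : ∀ x ∈ ball z₀ r, h x = h z₀ := by
        intro x hx
        refine (convex_ball z₀ r).is_const_of_fderivWithin_eq_zero
          (hh.mono (fun y hy => (hball y hy).2)) ?_ hx (Metric.mem_ball_self hr)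
        intro y hy
        rw [fderivWithin_of_isOpen Metric.isOpen_ball hy, ← toSpanSingleton_deriv, (hball y hy).1]
        refine ContinuousLinearMap.ext fun x => ?_
        simp
      exact Metric.eventually_nhds_iff_ball.mpr ⟨r, hr, hconst⟩
    · exact hne
  -- eventually good on punctured neighborhood of h z₀
  have hgood : ∀ z₀ ∈ 𝔻, ∀ᶠ w in 𝓝[≠] (h z₀),
      hinv w ∈ 𝔻 ∧ h (hinv w) = w ∧ deriv h (hinv w) ≠ 0 := by
    intro z₀ hz₀
    have h1 : ∀ᶠ x in 𝓝 z₀, x ≠ z₀ → deriv h x ≠ 0 :=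
      eventually_nhdsWithin_iff.mp (hiso z₀ hz₀)
    have h2 : ∀ᶠ w in 𝓝 (h z₀), hinv w ≠ z₀ → deriv h (hinv w) ≠ 0 :=
      (hinvtendsto z₀ hz₀).eventually h1
    filter_upwards [eventually_nhdsWithin_of_eventually_nhds ((hev z₀ hz₀).and h2),
      eventually_mem_nhdsWithin] with w hw hwne
    simp only [Set.mem_compl_iff, Set.mem_singleton_iff] at hwne
    refine ⟨hw.1.1, hw.1.2, hw.2 (fun hEq => hwne ?_)⟩
    rw [← hw.1.2, hEq]
  -- F is differentiable at every point of Ω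
  have hFda : ∀ z₀ ∈ 𝔻, DifferentiableAt ℂ F (h z₀) := by
    intro z₀ hz₀
    by_cases hne : deriv h z₀ = 0
    · have hcg : ContinuousAt g (hinv (h z₀)) := by
        rw [hleft z₀ hz₀]
        exact (hg.differentiableAt (hdisk_open.mem_nhds hz₀)).continuousAt
      have hcontF : ContinuousAt F (h z₀) := hcg.comp (hinvcont z₀ hz₀)
      have hdpunct : ∀ᶠ w in 𝓝[≠] (h z₀), DifferentiableAt ℂ F w := by
        filter_upwards [hgood z₀ hz₀] with w hw
        have := (hF (hinv w) hw.1 hw.2.2).differentiableAt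
        rwa [hw.2.1] at this
      exact (Complex.analyticAt_of_differentiable_on_punctured_nhds_of_continuousAt
        hdpunct hcontF).differentiableAt
    · exact (hF z₀ hz₀ hne).differentiableAt
  have hΩopen : IsOpen Ω := by
    rw [isOpen_iff_mem_nhds]
    rintro w ⟨z₀, hz₀, rfl⟩
    exact hΩnhds z₀ hz₀
  have hFan : AnalyticOnNhd ℂ F Ω := by
    apply DifferentiableOn.analyticOnNhd _ hΩopen
    rintro w ⟨z₀, hz₀, rfl⟩
    exact (hFda z₀ hz₀).differentiableWithinAt
  -- bound on deriv F at good points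
  have hboundgood : ∀ z₀ ∈ 𝔻, deriv h z₀ ≠ 0 → ‖deriv F (h z₀)‖ ≤ c := by
    intro z₀ hz₀ hne
    rw [(hF z₀ hz₀ hne).deriv, norm_mul, norm_inv]
    have h1 : ‖deriv g z₀‖ ≤ c * ‖deriv h z₀‖ := by
      simpa using hd z₀ hz₀
    have h2 : (0:ℝ) < ‖deriv h z₀‖ := norm_pos_iff.mpr hne
    calc ‖deriv g z₀‖ * ‖deriv h z₀‖⁻¹ ≤ (c * ‖deriv h z₀‖) * ‖deriv h z₀‖⁻¹ := by
          exact mul_le_mul_of_nonneg_right h1 (inv_nonneg.mpr h2.le)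
      _ = c := mul_inv_cancel_right₀ h2.ne' c
  have hbound : ∀ w ∈ Ω, ‖deriv F w‖ ≤ c := by
    rintro w ⟨z₀, hz₀, rfl⟩
    by_cases hne : deriv h z₀ = 0
    · have hdc : ContinuousAt (deriv F) (h z₀) :=
        ((hFan.deriv) _ ⟨z₀, hz₀, rfl⟩).continuousAt
      have hevb : ∀ᶠ w' in 𝓝[≠] (h z₀), ‖deriv F w'‖ ≤ c := by
        filter_upwards [hgood z₀ hz₀] with w' hw'
        have := hboundgood (hinv w') hw'.1 hw'.2.2
        rwa [hw'.2.1] at this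
      have ht : Filter.Tendsto (fun w' => ‖deriv F w'‖) (𝓝[≠] (h z₀))
          (𝓝 ‖deriv F (h z₀)‖) := (hdc.tendsto.mono_left nhdsWithin_le_nhds).norm
      exact le_of_tendsto ht hevb
    · exact hboundgood z₀ hz₀ hne
  -- segment from 0 to h z
  have hsub : segment ℝ (0:ℂ) (h z) ⊆ Ω := by
    intro x hx
    rw [segment_eq_image'] at hx
    obtain ⟨t, ht, rfl⟩ := hx
    have he : (0:ℂ) + t • (h z - 0) = (t:ℂ) * h z := by
      simp [Complex.real_smul]
    show (0:ℂ) + t • (h z - 0) ∈ Ω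
    rw [he]
    exact hstar (h z) ⟨z, hz, rfl⟩ t ht
  have hdiffs : ∀ x ∈ segment ℝ (0:ℂ) (h z), DifferentiableAt ℂ F x := by
    intro x hx
    obtain ⟨z₀, hz₀, rfl⟩ := hsub hx
    exact hFda z₀ hz₀
  have hbounds : ∀ x ∈ segment ℝ (0:ℂ) (h z), ‖fderiv ℂ F x‖ ≤ c := by
    intro x hx
    rw [← toSpanSingleton_deriv, ContinuousLinearMap.norm_toSpanSingleton]
    exact hbound x (hsub hx)
  have key := (convex_segment (0:ℂ) (h z)).norm_image_sub_le_of_norm_fderiv_le hdiffs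
    hbounds (left_mem_segment ℝ (0:ℂ) (h z)) (right_mem_segment ℝ (0:ℂ) (h z))
  have hF0 : F 0 = 0 := by
    have hi0 : hinv 0 = 0 := by
      conv_lhs => rw [← h0]
      exact hleft 0 h0mem
    simp only [hFdef, hi0, g0]
  have hFhz : F (h z) = g z := by
    simp only [hFdef, hleft z hz]
  rw [hF0, hFhz, sub_zero, sub_zero] at key
  simpa using key
end
end
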